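/- Let R ≥ 2 and 1 ≤ c ≤ R − 1 be integers, let p_1, …, p_R be strictly positive reals with p_1 + ⋯ + p_R = 1, and let n ≥ 1 be an integer. Let n_{c+1}, …, n_R ≥ 1 be integers with Σ_{j=c+1}^R n_j = n (the observed vector has zeros in cells 1, …, c). Suppose p_i ≤ p_j / n for every i ∈ {1, …, c} and every j ∈ {c+1, …, R}. Then for every m ≤ c and all nonnegative integers n'_1, …, n'_m and n'_{c+1}, …, n'_R with n'_j ≤ n_j for all j ∈ {c+1, …, R} and Σ_{i=1}^m n'_i + Σ_{j=c+1}^R n'_j = n, the multinomial probabilities satisfy: n!/(Π_{j=c+1}^R n_j!) · Π_{j=c+1}^R p_j^{n_j} ≥ n!/(Π_{i=1}^m n'_i! · Π_{j=c+1}^R n'_j!) · Π_{i=1}^m p_i^{n'_i} · Π_{j=c+1}^R p_j^{n'_j}. -/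

import Mathlib

open Finset

lemma fact_le_aux_lik (b k c : ℕ) (h : b + k ≤ c) :
    (b + k).factorial ≤ b.factorial * c ^ k := by
  induction k with
  | zero => simp
  | succ k ih =>
    have h' : b + k ≤ c := by omega
    calc (b + (k + 1)).factorial = (b + k + 1) * (b + k).factorial := by
          rw [show b + (k + 1) = (b + k) + 1 by ring, Nat.factorial_succ]
      _ ≤ c * (b.factorial * c ^ k) := Nat.mul_le_mul (by omega) (ih h')
      _ = b.factorial * c ^ (k + 1) := by ring

/-- Proposition 1 of the paper (likelihood inequality): for a multinomial
`M(n; p₁, …, p_R)` with zeros observed in cells `1, …, c`, if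
`pᵢ ≤ pⱼ / n` for every empty cell `i` and nonempty cell `j`, then the
observed vector is at least as likely as any vector obtained by moving
observations from the nonempty cells into the first `m ≤ c` empty cells. -/
theorem likelihood_inequality
    (R c : ℕ) (hR : 2 ≤ R) (hc1 : 1 ≤ c) (hcR : c ≤ R - 1)
    (p : ℕ → ℝ) (hp : ∀ r ∈ Finset.Icc 1 R, 0 < p r)
    (hpsum : ∑ r ∈ Finset.Icc 1 R, p r = 1)
    (n : ℕ) (hn : 1 ≤ n)
    (nj : ℕ → ℕ) (hnj : ∀ j ∈ Finset.Icc (c + 1) R, 1 ≤ nj j)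
    (hnsum : ∑ j ∈ Finset.Icc (c + 1) R, nj j = n)
    (hcond : ∀ i ∈ Finset.Icc 1 c, ∀ j ∈ Finset.Icc (c + 1) R, p i ≤ p j / n)
    (m : ℕ) (hm : m ≤ c) (n' : ℕ → ℕ)
    (hle : ∀ j ∈ Finset.Icc (c + 1) R, n' j ≤ nj j)
    (hsum' : ∑ i ∈ Finset.Icc 1 m, n' i + ∑ j ∈ Finset.Icc (c + 1) R, n' j = n) :
    (n.factorial : ℝ) / (∏ j ∈ Finset.Icc (c + 1) R, ((nj j).factorial : ℝ)) *
        ∏ j ∈ Finset.Icc (c + 1) R, p j ^ nj j ≥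
      (n.factorial : ℝ) /
          ((∏ i ∈ Finset.Icc 1 m, ((n' i).factorial : ℝ)) *
            ∏ j ∈ Finset.Icc (c + 1) R, ((n' j).factorial : ℝ)) *
        ((∏ i ∈ Finset.Icc 1 m, p i ^ n' i) *
          ∏ j ∈ Finset.Icc (c + 1) R, p j ^ n' j) := by
  set S := Finset.Icc (c + 1) R with hSdef
  set T := Finset.Icc 1 m with hTdef
  have hSne : S.Nonempty := by
    rw [hSdef, Finset.nonempty_Icc]; omega
  have hnpos : (0 : ℝ) < (n : ℝ) := by exact_mod_cast hn
  have hjR : ∀ j ∈ S, j ∈ Finset.Icc 1 R := by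
    intro j hj
    rw [hSdef, Finset.mem_Icc] at hj
    rw [Finset.mem_Icc]; omega
  have hiR : ∀ i ∈ T, i ∈ Finset.Icc 1 c := by
    intro i hi
    rw [hTdef, Finset.mem_Icc] at hi
    rw [Finset.mem_Icc]; omega
  have hiR' : ∀ i ∈ T, i ∈ Finset.Icc 1 R := by
    intro i hi
    have := hiR i hi
    rw [Finset.mem_Icc] at *
    omega
  obtain ⟨j0, hj0, hμ⟩ := S.exists_mem_eq_inf' hSne (fun j => p j / n)
  set μ := S.inf' hSne (fun j => p j / n) with hμdef
  have hμpos : 0 < μ := by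
    rw [hμ]; exact div_pos (hp j0 (hjR j0 hj0)) hnpos
  have hμle : ∀ j ∈ S, μ ≤ p j / n := fun j hj => Finset.inf'_le _ hj
  have hpμ : ∀ i ∈ T, p i ≤ μ := by
    intro i hi
    rw [hμ]; exact hcond i (hiR i hi) j0 hj0
  set k : ℕ → ℕ := fun j => nj j - n' j with hkdef
  have hnk : ∀ j ∈ S, nj j = n' j + k j := by
    intro j hj
    have := hle j hj
    simp only [hkdef]
    omega
  set K := ∑ i ∈ T, n' i with hKdef
  have hKk : ∑ j ∈ S, k j = K := by
    have h1 : ∑ j ∈ S, (n' j + k j) = ∑ j ∈ S, nj j :=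
      Finset.sum_congr rfl fun j hj => (hnk j hj).symm
    rw [Finset.sum_add_distrib, hnsum] at h1
    omega
  -- factorial bound
  have hnjle : ∀ j ∈ S, nj j ≤ n := by
    intro j hj
    rw [← hnsum]
    exact Finset.single_le_sum (fun i _ => Nat.zero_le _) hj
  have hfact : ∀ j ∈ S, (nj j).factorial ≤ (n' j).factorial * n ^ (k j) := by
    intro j hj
    rw [hnk j hj]
    exact fact_le_aux_lik _ _ _ (by rw [← hnk j hj]; exact hnjle j hj)
  set F := ∏ j ∈ S, ((nj j).factorial : ℝ) with hFdef
  set B := ∏ j ∈ S, ((n' j).factorial : ℝ) with hBdef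
  set A := ∏ i ∈ T, ((n' i).factorial : ℝ) with hAdef
  set P := ∏ i ∈ T, p i ^ n' i with hPdef
  set Q := ∏ j ∈ S, p j ^ n' j with hQdef
  set Qf := ∏ j ∈ S, p j ^ nj j with hQfdef
  set kprod := ∏ j ∈ S, p j ^ k j with hkproddef
  have hFpos : 0 < F := Finset.prod_pos fun j _ => by
    exact_mod_cast (nj j).factorial_pos
  have hBpos : 0 < B := Finset.prod_pos fun j _ => by
    exact_mod_cast (n' j).factorial_pos
  have hA1 : (1 : ℝ) ≤ A := by
    rw [hAdef]
    calc (1 : ℝ) = ∏ _i ∈ T, (1 : ℝ) := by simp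
      _ ≤ ∏ i ∈ T, ((n' i).factorial : ℝ) := by
          apply Finset.prod_le_prod
          · intro i _; norm_num
          · intro i _; exact_mod_cast (n' i).factorial_pos
  have hPnn : 0 ≤ P := Finset.prod_nonneg fun i hi =>
    pow_nonneg (le_of_lt (hp i (hiR' i hi))) _
  have hQpos : 0 < Q := Finset.prod_pos fun j hj =>
    pow_pos (hp j (hjR j hj)) _
  have hF : F ≤ B * (n : ℝ) ^ K := by
    calc F ≤ ∏ j ∈ S, (((n' j).factorial : ℝ) * (n : ℝ) ^ (k j)) := by
          apply Finset.prod_le_prod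
          · intro j _; positivity
          · intro j hj; exact_mod_cast hfact j hj
      _ = B * ∏ j ∈ S, (n : ℝ) ^ (k j) := Finset.prod_mul_distrib
      _ = B * (n : ℝ) ^ K := by
          rw [Finset.prod_pow_eq_pow_sum, hKk]
  have hP : P ≤ μ ^ K := by
    calc P ≤ ∏ i ∈ T, μ ^ n' i := by
          apply Finset.prod_le_prod
          · intro i hi; exact pow_nonneg (le_of_lt (hp i (hiR' i hi))) _
          · intro i hi
            exact pow_le_pow_left₀ (le_of_lt (hp i (hiR' i hi))) (hpμ i hi) _
      _ = μ ^ K := by rw [Finset.prod_pow_eq_pow_sum, hKdef]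
  have hPn : P * (n : ℝ) ^ K ≤ kprod := by
    calc P * (n : ℝ) ^ K ≤ μ ^ K * (n : ℝ) ^ K := by
          apply mul_le_mul_of_nonneg_right hP (by positivity)
      _ = (μ * n) ^ K := (mul_pow _ _ _).symm
      _ = ∏ j ∈ S, (μ * n) ^ k j := by rw [Finset.prod_pow_eq_pow_sum, hKk]
      _ ≤ kprod := by
          apply Finset.prod_le_prod
          · intro j _; positivity
          · intro j hj
            apply pow_le_pow_left₀ (by positivity)
            exact (le_div_iff₀ hnpos).mp (hμle j hj)
  have hQf : Qf = Q * kprod := by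
    rw [hQfdef, hQdef, hkproddef, ← Finset.prod_mul_distrib]
    exact Finset.prod_congr rfl fun j hj => by rw [hnk j hj, pow_add]
  have hfac : (0:ℝ) < (n.factorial : ℝ) := by exact_mod_cast n.factorial_pos
  have step1 : (n.factorial : ℝ) / (A * B) * (P * Q) ≤
      (n.factorial : ℝ) / B * (P * Q) := by
    apply mul_le_mul_of_nonneg_right _ (by positivity)
    apply div_le_div_of_nonneg_left (le_of_lt hfac) hBpos
    nlinarith [hBpos, hA1]
  have step2 : (n.factorial : ℝ) / B * (P * Q) ≤
      (n.factorial : ℝ) / F * Qf := by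
    rw [div_mul_eq_mul_div, div_mul_eq_mul_div, div_le_div_iff₀ hBpos hFpos]
    calc (n.factorial : ℝ) * (P * Q) * F
        ≤ (n.factorial : ℝ) * (P * Q) * (B * (n : ℝ) ^ K) := by
          apply mul_le_mul_of_nonneg_left hF (by positivity)
      _ = ((n.factorial : ℝ) * Q * B) * (P * (n : ℝ) ^ K) := by ring
      _ ≤ ((n.factorial : ℝ) * Q * B) * kprod := by
          apply mul_le_mul_of_nonneg_left hPn (by positivity)
      _ = (n.factorial : ℝ) * (Q * kprod) * B := by ring
      _ = (n.factorial : ℝ) * Qf * B := by rw [hQf]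
  exact le_trans step1 step2
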